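/- Every valid covering inequality for the dominant of the odd cycle polytope transfers to a valid inequality for the odd-red perfect matching polytope: if a ∈ R^E_{≥0}, b ∈ R and a^T χ^C ≥ b for every odd cycle C in G, then for every perfect matching M of Ĝ with |M ∩ R̂| odd, Σ_{{u,v}∈E} a_{{u,v}}(χ^M_{{u⁺,v⁻}} + χ^M_{{u⁻,v⁺}}) ≥ b. -/

import Mathlib

open SimpleGraph

/-- The bipartite double cover `Ĝ` of a graph `G` (`Sum.inl v = v⁺`, `Sum.inr v = v⁻`). -/
def doubleCover {V : Type*} (G : SimpleGraph V) : SimpleGraph (V ⊕ V) where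
  Adj a b :=
    match a, b with
    | Sum.inl u, Sum.inr v => u = v ∨ G.Adj u v
    | Sum.inr u, Sum.inl v => u = v ∨ G.Adj u v
    | _, _ => False
  symm := by
    constructor
    rintro (u | u) (v | v) h
    · exact h.elim
    · exact h.imp Eq.symm (fun h' => h'.symm)
    · exact h.imp Eq.symm (fun h' => h'.symm)
    · exact h.elim
  loopless := ⟨by rintro (u | u) h <;> exact h⟩

namespace Stmt8Aux

variable {V : Type*}

def chainWalk {G : SimpleGraph V} : ∀ (l : List V) (u v : V),
    List.Chain G.Adj u (l ++ [v]) → G.Walk u v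
  | [], u, v, h => Walk.cons (by simpa [List.Chain] using h) Walk.nil
  | w :: l, u, v, h =>
    Walk.cons (List.chain_cons.mp h).1 (chainWalk l w v (List.chain_cons.mp h).2)

lemma chainWalk_length {G : SimpleGraph V} : ∀ (l : List V) (u v : V) (h),
    (chainWalk (G := G) l u v h).length = l.length + 1
  | [], _, _, _ => rfl
  | w :: l, u, v, h => by
    simp [chainWalk, chainWalk_length l]
    exact chainWalk_length l _ _ _

lemma chainWalk_support {G : SimpleGraph V} : ∀ (l : List V) (u v : V) (h),
    (chainWalk (G := G) l u v h).support = u :: (l ++ [v])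
  | [], _, _, _ => rfl
  | w :: l, u, v, h => by
    simp [chainWalk, chainWalk_support l]
    exact chainWalk_support l _ _ _

lemma chainWalk_edges {G : SimpleGraph V} : ∀ (l : List V) (u v : V) (h),
    (chainWalk (G := G) l u v h).edges
      = List.zipWith (fun a b => s(a, b)) (u :: l) (l ++ [v])
  | [], _, _, _ => rfl
  | w :: l, u, v, h => by
    simp [chainWalk, chainWalk_edges l]
    exact chainWalk_edges l _ _ _

lemma zipWith_map_same {α β γ : Type*} (h : α → α → β) (f g : γ → α) :
    ∀ l : List γ, List.zipWith h (l.map f) (l.map g) = l.map fun i => h (f i) (g i)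
  | [] => rfl
  | c :: l => by simp [zipWith_map_same h f g l]

lemma even_multiset_sum (s : Multiset ℕ) : (∀ x ∈ s, Even x) → Even s.sum :=
  Multiset.induction_on s (by simp) fun a t ih h => by
    rw [Multiset.sum_cons]
    exact (h a (Multiset.mem_cons_self a t)).add (ih fun x hx => h x (Multiset.mem_cons_of_mem hx))

end Stmt8Aux

open Stmt8Aux

/-- Any valid covering inequality `a^T x ≥ b` (with `a ≥ 0`) for the dominant of the
odd cycle polytope of `G` transfers to a valid inequality for the odd-red perfect
matching polytope of the double cover `Ĝ`: for every perfect matching `M` of `Ĝ`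
containing an odd number of red edges, the sum of `a` over the projections to `G` of
the red matching edges is at least `b`. -/
theorem stmt_8 {V : Type*} [Fintype V] [DecidableEq V] (G : SimpleGraph V)
    (a : Sym2 V → ℝ) (ha : ∀ e, 0 ≤ a e) (b : ℝ)
    (hvalid : ∀ (u : V) (p : G.Walk u u), p.IsCycle → Odd p.length →
      b ≤ (p.edges.map a).sum)
    (M : (doubleCover G).Subgraph) (hM : M.IsPerfectMatching)
    (hodd : Odd ((M.edgeSet ∩ {e | ∀ v : V, e ≠ s(Sum.inl v, Sum.inr v)}).ncard)) :
    b ≤ ∑ᶠ m ∈ M.edgeSet ∩ {e | ∀ v : V, e ≠ s(Sum.inl v, Sum.inr v)},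
        a (Sym2.map (Sum.elim id id) m) := by
  classical
  set S : Set (Sym2 (V ⊕ V)) := M.edgeSet ∩ {e | ∀ v : V, e ≠ s(Sum.inl v, Sum.inr v)} with hSdef
  -- the matching function
  have hmatch : ∀ v : V, ∃! w : V, M.Adj (Sum.inl v) (Sum.inr w) := by
    intro v
    obtain ⟨w, hw, hw'⟩ := hM.1 (hM.2 (Sum.inl v))
    cases w with
    | inl u => exact absurd (M.adj_sub hw) (by simp [doubleCover])
    | inr u =>
      exact ⟨u, hw, fun y hy => Sum.inr.inj (hw' _ hy)⟩
  let F : V → V := fun v => (hmatch v).choose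
  have hF : ∀ v, M.Adj (Sum.inl v) (Sum.inr (F v)) := fun v => (hmatch v).choose_spec.1
  have hFuniq : ∀ v w, M.Adj (Sum.inl v) (Sum.inr w) → w = F v :=
    fun v w h => (hmatch v).choose_spec.2 w h
  have hFinj : Function.Injective F := by
    intro u v huv
    have h1 := hF u
    rw [huv] at h1
    obtain ⟨w, hw, hw'⟩ := hM.1 (hM.2 (Sum.inr (F v)))
    have h3 := hw' _ h1.symm
    have h4 := hw' _ (hF v).symm
    exact Sum.inl.inj (h3.trans h4.symm)
  let σ : Equiv.Perm V := Equiv.ofBijective F (Finite.injective_iff_bijective.mp hFinj)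
  have hσ : ∀ v, σ v = F v := fun _ => rfl
  have hAdjG : ∀ v, F v ≠ v → G.Adj v (F v) := by
    intro v hne
    have h' : v = F v ∨ G.Adj v (F v) := M.adj_sub (hF v)
    exact h'.resolve_left fun h => hne h.symm
  -- membership of lifted edges
  have hSmem : ∀ v : V, F v ≠ v → s(Sum.inl v, Sum.inr (F v)) ∈ S := by
    intro v hv
    refine ⟨SimpleGraph.Subgraph.mem_edgeSet.mpr (hF v), ?_⟩
    intro w heq
    rw [Sym2.eq_iff] at heq
    rcases heq with ⟨h1, h2⟩ | ⟨h1, _⟩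
    · exact hv ((Sum.inr.inj h2).trans (Sum.inl.inj h1).symm)
    · exact absurd h1 (by simp)
  have hSsub : ∀ e ∈ S, ∃ v : V, F v ≠ v ∧ e = s(Sum.inl v, Sum.inr (F v)) := by
    rintro e ⟨he, hred⟩
    induction e using Sym2.ind with
    | _ p q =>
      have hadj : M.Adj p q := SimpleGraph.Subgraph.mem_edgeSet.mp he
      match p, q with
      | Sum.inl u, Sum.inl w => exact absurd (M.adj_sub hadj) (by simp [doubleCover])
      | Sum.inr u, Sum.inr w => exact absurd (M.adj_sub hadj) (by simp [doubleCover])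
      | Sum.inl u, Sum.inr w =>
        have hw : w = F u := hFuniq _ _ hadj
        subst hw
        refine ⟨u, fun hfu => ?_, rfl⟩
        exact hred u (by rw [hfu])
      | Sum.inr w, Sum.inl u =>
        have hw : w = F u := hFuniq _ _ hadj.symm
        subst hw
        refine ⟨u, fun hfu => ?_, Sym2.eq_swap⟩
        exact hred u (by rw [hfu, Sym2.eq_swap])
  have hSeq : S = (fun v => s(Sum.inl v, Sum.inr (F v))) '' {v | F v ≠ v} := by
    ext e
    constructor
    · intro he
      obtain ⟨v, hv, rfl⟩ := hSsub e he
      exact ⟨v, hv, rfl⟩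
    · rintro ⟨v, hv, rfl⟩
      exact hSmem v hv
  have hminj : Function.Injective (fun v : V => s(Sum.inl v, Sum.inr (F v))) := by
    intro u v h
    simp only [Sym2.eq_iff] at h
    rcases h with ⟨h1, _⟩ | ⟨h1, _⟩
    · exact Sum.inl.inj h1
    · exact absurd h1 (by simp)
  have hcard : S.ncard = σ.support.card := by
    rw [hSeq, Set.ncard_image_of_injective _ hminj]
    have hs2 : {v | F v ≠ v} = ↑σ.support := by
      ext v
      simp [Equiv.Perm.mem_support, hσ]
    rw [hs2, Set.ncard_coe_finset]
  rw [hcard] at hodd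
  -- find an odd cycle factor
  have hoddcyc : ∃ c ∈ σ.cycleFactorsFinset, Odd c.support.card := by
    by_contra hcon
    push_neg at hcon
    have hev : Even σ.cycleType.sum := by
      apply even_multiset_sum
      intro k hk
      rw [Equiv.Perm.cycleType_def, Multiset.mem_map] at hk
      obtain ⟨c, hc, rfl⟩ := hk
      exact Nat.not_odd_iff_even.mp (hcon c hc)
    rw [Equiv.Perm.sum_cycleType] at hev
    exact (Nat.not_odd_iff_even.mpr hev) hodd
  obtain ⟨c, hc, hoddn⟩ := hoddcyc
  set n := c.support.card with hn
  have hcyc := (Equiv.Perm.mem_cycleFactorsFinset_iff.mp hc).1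
  have h3n : 3 ≤ n := by
    have h2 := hcyc.two_le_card_support
    obtain ⟨k, hk⟩ := hoddn
    omega
  have hC : σ.IsCycleOn ↑c.support :=
    Equiv.Perm.isCycleOn_support_of_mem_cycleFactorsFinset hc
  obtain ⟨x, hx⟩ := hcyc.nonempty_support
  set q : ℕ → V := fun i => (σ ^ i) x with hqdef
  have hqsucc : ∀ i, q (i + 1) = σ (q i) := by
    intro i
    show (σ ^ (i + 1)) x = σ ((σ ^ i) x)
    rw [pow_succ']
    rfl
  have hqmem : ∀ i, q i ∈ c.support := by
    intro i
    induction i with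
    | zero => exact hx
    | succ i ih =>
      rw [hqsucc]
      exact hC.apply_mem_iff.mpr ih
  have hModEq : ∀ i j : ℕ, q i = q j → i ≡ j [MOD n] := by
    intro i j h
    exact (hC.pow_apply_eq_pow_apply hx).mp h
  have hqinj : ∀ i j, i < n → j < n → q i = q j → i = j :=
    fun i j hi hj h => (hModEq i j h).eq_of_lt_of_lt hi hj
  have hqn : q n = x := (hC.pow_apply_eq hx).mpr dvd_rfl
  have hne0 : ∀ i, F (q i) ≠ q i := by
    intro i h
    have hmem := Equiv.Perm.mem_cycleFactorsFinset_support_le hc (hqmem i)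
    exact (Equiv.Perm.mem_support.mp hmem) ((hσ (q i)).trans h)
  have hadj : ∀ i, G.Adj (q i) (q (i + 1)) := by
    intro i
    rw [hqsucc, hσ]
    exact hAdjG (q i) (hne0 i)
  -- lists
  obtain ⟨m, hm⟩ : ∃ m, n = m + 1 := ⟨n - 1, by omega⟩
  set L : List V := (List.range m).map (fun i => q (i + 1)) with hLdef
  have h1 : x :: L = (List.range n).map q := by
    rw [hm, List.range_succ_eq_map, List.map_cons, List.map_map]
    rfl
  have h2 : L ++ [x] = (List.range n).map (fun i => q (i + 1)) := by
    conv_rhs => rw [hm, List.range_succ, List.map_append]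
    simp only [List.map_cons, List.map_nil]
    rw [← hm, hqn]
  have hfull : x :: (L ++ [x]) = (List.range (n + 1)).map q := by
    rw [List.range_succ, List.map_append, show (x :: (L ++ [x])) = (x :: L) ++ [x] from rfl, h1]
    simp [hqn]
  have hchain : List.Chain G.Adj x (L ++ [x]) := by
    have hch : List.Chain' G.Adj ((List.range (n + 1)).map q) := by
      unfold List.Chain'
      rw [List.isChain_map, List.isChain_range_succ]
      exact fun i _ => hadj i
    rw [← hfull] at hch
    exact hch
  set p : G.Walk x x := chainWalk L x x hchain with hpdef
  have hlen : p.length = n := by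
    rw [hpdef, chainWalk_length, hLdef, List.length_map, List.length_range]
    omega
  have htail : p.support.tail = (List.range n).map (fun i => q (i + 1)) := by
    rw [hpdef, chainWalk_support]
    exact h2
  have htailnodup : p.support.tail.Nodup := by
    rw [htail]
    refine List.Nodup.map_on ?_ (List.nodup_range)
    intro i hi j hj h
    rw [List.mem_range] at hi hj
    exact (Nat.ModEq.add_right_cancel' 1 (hModEq _ _ h)).eq_of_lt_of_lt hi hj
  have hedges : p.edges = (List.range n).map (fun i => s(q i, q (i + 1))) := by
    rw [hpdef, chainWalk_edges, h1, h2, zipWith_map_same]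
  have hedgenodup : p.edges.Nodup := by
    rw [hedges]
    refine List.Nodup.map_on ?_ (List.nodup_range)
    intro i hi j hj h
    rw [List.mem_range] at hi hj
    rw [Sym2.eq_iff] at h
    rcases h with ⟨hh1, _⟩ | ⟨hh1, hh2⟩
    · exact hqinj i j hi hj hh1
    · exfalso
      have e1 := hModEq _ _ hh1
      have e2 := hModEq _ _ hh2
      have e3 : j ≡ j + 2 [MOD n] := by
        calc j ≡ i + 1 [MOD n] := e2.symm
          _ ≡ (j + 1) + 1 [MOD n] := e1.add_right 1
          _ = j + 2 := by omega
      have hdvd : n ∣ 2 := by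
        have := (Nat.modEq_iff_dvd' (Nat.le_add_right j 2)).mp e3
        simpa using this
      have := Nat.le_of_dvd (by norm_num) hdvd
      omega
  have hcycle : p.IsCycle := by
    rw [SimpleGraph.Walk.isCycle_def]
    refine ⟨⟨hedgenodup⟩, ?_, htailnodup⟩
    intro hnil
    rw [hnil] at hlen
    simp at hlen
    omega
  have hval := hvalid x p hcycle (by rw [hlen]; exact hoddn)
  -- transfer the sum
  set proj : Sym2 (V ⊕ V) → Sym2 V := Sym2.map (Sum.elim id id) with hprojdef
  set mf : ℕ → Sym2 (V ⊕ V) := fun i => s(Sum.inl (q i), Sum.inr (q (i + 1))) with hmfdef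
  have hproj : ∀ i, proj (mf i) = s(q i, q (i + 1)) := by
    intro i
    simp [hprojdef, hmfdef, Sym2.map_pair_eq]
  have hmf_mem : ∀ i, mf i ∈ S := by
    intro i
    have hF' : F (q i) = q (i + 1) := by rw [hqsucc]; rfl
    have := hSmem (q i) (hne0 i)
    rw [hF'] at this
    exact this
  have hmf_inj : ∀ i ∈ List.range n, ∀ j ∈ List.range n, mf i = mf j → i = j := by
    intro i hi j hj h
    rw [List.mem_range] at hi hj
    simp only [hmfdef, Sym2.eq_iff] at h
    rcases h with ⟨hh1, _⟩ | ⟨hh1, _⟩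
    · exact hqinj i j hi hj (Sum.inl.inj hh1)
    · exact absurd hh1 (by simp)
  set ML : List (Sym2 (V ⊕ V)) := (List.range n).map mf with hMLdef
  have hML_nodup : ML.Nodup := List.Nodup.map_on hmf_inj (List.nodup_range)
  have hSfin : S.Finite := Set.toFinite S
  rw [finsum_mem_eq_finite_toFinset_sum _ hSfin]
  refine le_trans hval ?_
  have key : (p.edges.map a).sum = (ML.map (fun e => a (proj e))).sum := by
    rw [hedges, hMLdef, List.map_map, List.map_map]
    apply congrArg
    apply List.map_congr_left
    intro i _
    simp only [Function.comp_apply, hproj]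
  rw [key, ← List.sum_toFinset _ hML_nodup]
  apply Finset.sum_le_sum_of_subset_of_nonneg
  · intro e he
    rw [List.mem_toFinset, hMLdef, List.mem_map] at he
    obtain ⟨i, _, rfl⟩ := he
    exact hSfin.mem_toFinset.mpr (hmf_mem i)
  · intro e _ _
    exact ha _
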